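/- Fix a > 0 and A_f, B_f > 0 with A_f/B_f ≤ a². With g as in the lemma, lim_{A₀ → ∞} g(A₀) = +∞. Consequently, since g is continuous, strictly increasing, and g(A_f) ≤ 0, there exists a unique A₀ ≥ A_f with g(A₀) = 0. -/

import Mathlib

open Filter

open Set

namespace G8

noncomputable def F (φ w : ℝ) : ℝ :=
  (φ * w - 1 + Real.sqrt ((φ * w - 1) ^ 2 + 4 * w ^ 3)) / (2 * w ^ 2)

noncomputable def H (φ w : ℝ) : ℝ := F φ w / (1 + w * F φ w ^ 2)

noncomputable def K (φ w : ℝ) : ℝ := 1 / w - F φ w ^ 2 / (1 + w * F φ w ^ 2)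

lemma arg_nonneg (φ : ℝ) {w : ℝ} (hw : 0 < w) : 0 ≤ (φ * w - 1) ^ 2 + 4 * w ^ 3 := by positivity

lemma sqrt_sq' (φ : ℝ) {w : ℝ} (hw : 0 < w) :
    (Real.sqrt ((φ * w - 1) ^ 2 + 4 * w ^ 3)) ^ 2 = (φ * w - 1) ^ 2 + 4 * w ^ 3 :=
  Real.sq_sqrt (arg_nonneg φ hw)

lemma F_ge (φ : ℝ) {w : ℝ} (hw : 2 + |φ| ≤ w) : 1 / (3 * w) ≤ F φ w := by
  have hw0 : 0 < w := by have := abs_nonneg φ; linarith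
  have hs2 := sqrt_sq' φ hw0
  have hs0 : 0 ≤ Real.sqrt ((φ * w - 1) ^ 2 + 4 * w ^ 3) := Real.sqrt_nonneg _
  set s := Real.sqrt ((φ * w - 1) ^ 2 + 4 * w ^ 3) with hs
  have hφ := neg_abs_le φ
  have key : 2 * w / 3 ≤ φ * w - 1 + s := by
    rcases le_or_gt (2 * w / 3 - (φ * w - 1)) 0 with h | h
    · linarith
    · set r := 2 * w / 3 - (φ * w - 1) with hr
      have h1 : 0 ≤ w ^ 2 * (w - 2 - |φ|) := mul_nonneg (sq_nonneg w) (by linarith)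
      have h2 : 0 ≤ w * (w - 1) := by nlinarith [abs_nonneg φ]
      have h3 : 0 ≤ (|φ| + φ) * w ^ 2 := mul_nonneg (by linarith) (sq_nonneg w)
      have hsq : r ^ 2 ≤ s ^ 2 := by rw [hs2, hr]; nlinarith
      nlinarith [hsq, h, hs0]
  rw [F, div_le_div_iff₀ (by positivity) (by positivity)]
  have := mul_le_mul_of_nonneg_right key (by positivity : (0:ℝ) ≤ 3 * w)
  nlinarith [this]

lemma F_le (φ : ℝ) {w : ℝ} (hw : 2 + |φ| ≤ w) : F φ w ≤ 1 := by
  have hw0 : 0 < w := by have := abs_nonneg φ; linarith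
  have hφ := le_abs_self φ
  have hφ' := neg_abs_le φ
  have ha : 0 ≤ w * (w - 2 - |φ|) := mul_nonneg hw0.le (by linarith)
  have hb : 0 ≤ (|φ| - φ) * w := by
    apply mul_nonneg _ hw0.le; linarith
  have h3 : 0 ≤ w ^ 2 - φ * w - w + 1 := by nlinarith
  have hs : Real.sqrt ((φ * w - 1) ^ 2 + 4 * w ^ 3) ≤ 2 * w ^ 2 - (φ * w - 1) := by
    have h1 : (φ * w - 1) ^ 2 + 4 * w ^ 3 ≤ (2 * w ^ 2 - (φ * w - 1)) ^ 2 := by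
      nlinarith [mul_nonneg (sq_nonneg w) h3]
    calc Real.sqrt ((φ * w - 1) ^ 2 + 4 * w ^ 3) ≤ Real.sqrt ((2 * w ^ 2 - (φ * w - 1)) ^ 2) :=
          Real.sqrt_le_sqrt h1
      _ = |2 * w ^ 2 - (φ * w - 1)| := Real.sqrt_sq_eq_abs _
      _ = 2 * w ^ 2 - (φ * w - 1) := abs_of_nonneg (by nlinarith [mul_nonneg hw0.le (by linarith : (0:ℝ) ≤ w - |φ|)])
  rw [F, div_le_one (by positivity)]
  linarith

lemma F_nonneg (φ : ℝ) {w : ℝ} (hw : 0 < w) : 0 ≤ F φ w := by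
  have h1 : |φ * w - 1| ≤ Real.sqrt ((φ * w - 1) ^ 2 + 4 * w ^ 3) := by
    rw [← Real.sqrt_sq_eq_abs]
    exact Real.sqrt_le_sqrt (by nlinarith [pow_pos hw 3])
  have h2 := neg_abs_le (φ * w - 1)
  exact div_nonneg (by linarith) (by positivity)

lemma one_add_pos (φ : ℝ) {w : ℝ} (hw : 0 < w) : 0 < 1 + w * F φ w ^ 2 := by
  have := F_nonneg φ hw; positivity

lemma F_identity (φ : ℝ) {w : ℝ} (hw : 0 < w) :
    w ^ 2 * F φ w ^ 2 = (φ * w - 1) * F φ w + w := by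
  have hs := sqrt_sq' φ hw
  rw [F]
  have hw2 : (2 * w ^ 2) ≠ 0 := by positivity
  generalize Real.sqrt ((φ * w - 1) ^ 2 + 4 * w ^ 3) = s at hs ⊢
  field_simp
  nlinarith [hs]

lemma H_nonneg (φ : ℝ) {w : ℝ} (hw : 0 < w) : 0 ≤ H φ w :=
  div_nonneg (F_nonneg φ hw) (one_add_pos φ hw).le

lemma K_pos (φ : ℝ) {w : ℝ} (hw : 0 < w) : 0 < K φ w := by
  have h1 := one_add_pos φ hw
  have : K φ w = 1 / (w * (1 + w * F φ w ^ 2)) := by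
    rw [K]; field_simp; ring
  rw [this]; positivity

lemma H_ge (φ : ℝ) {w : ℝ} (hw : 2 + |φ| ≤ w) :
    1 / ((3 + |φ|) * (3 * w)) ≤ H φ w := by
  have hw0 : 0 < w := by have := abs_nonneg φ; linarith
  have hF0 := F_nonneg φ hw0
  have hF1 := F_le φ hw
  have hFg := F_ge φ hw
  have hid := F_identity φ hw0
  have hφ := le_abs_self φ
  have hwa : w * F φ w ^ 2 ≤ |φ| + 2 := by
    have h1 : w ^ 2 * F φ w ^ 2 ≤ (|φ| * w + 1) * 1 + w := by
      rw [hid]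
      have : (φ * w - 1) * F φ w ≤ (|φ| * w + 1) * 1 := by
        have hb : φ * w - 1 ≤ |φ| * w + 1 := by nlinarith [abs_nonneg φ]
        rcases le_or_gt 0 (φ * w - 1) with h | h
        · exact mul_le_mul hb hF1 hF0 (by positivity)
        · nlinarith [abs_nonneg φ]
      linarith
    have hw1 : (1:ℝ) ≤ w := by have := abs_nonneg φ; linarith
    nlinarith [sq_nonneg (F φ w)]
  have hden : 0 < 1 + w * F φ w ^ 2 := one_add_pos φ hw0
  have hden2 : 1 + w * F φ w ^ 2 ≤ 3 + |φ| := by linarith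
  rw [H]
  rw [div_le_div_iff₀ (by positivity) hden]
  calc 1 * (1 + w * F φ w ^ 2) ≤ 3 + |φ| := by linarith
    _ = (1 / (3 * w)) * ((3 + |φ|) * (3 * w)) := by field_simp
    _ ≤ F φ w * ((3 + |φ|) * (3 * w)) := by
        apply mul_le_mul_of_nonneg_right hFg
        positivity

lemma F_continuousOn (φ : ℝ) : ContinuousOn (F φ) (Ioi 0) := by
  apply ContinuousOn.div
  · apply ContinuousOn.add (by fun_prop)
    exact (Real.continuous_sqrt.comp (by fun_prop)).continuousOn
  · fun_prop
  · intro w hw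
    have : (0:ℝ) < w := hw
    positivity

lemma H_continuousOn (φ : ℝ) : ContinuousOn (H φ) (Ioi 0) := by
  apply ContinuousOn.div
  · exact F_continuousOn φ
  · exact continuousOn_const.add (continuousOn_id.mul ((F_continuousOn φ).pow 2))
  · exact fun w hw => (one_add_pos φ hw).ne'

lemma K_continuousOn (φ : ℝ) : ContinuousOn (K φ) (Ioi 0) := by
  apply ContinuousOn.sub
  · exact continuousOn_const.div continuousOn_id (fun w hw => ne_of_gt hw)
  · exact ((F_continuousOn φ).pow 2).div
      (continuousOn_const.add (continuousOn_id.mul ((F_continuousOn φ).pow 2)))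
      (fun w hw => (one_add_pos φ hw).ne')

lemma clamp_continuous {G : ℝ → ℝ} {c : ℝ} (hc : 0 < c) (hG : ContinuousOn G (Ioi 0)) :
    Continuous (fun w => G (max w c)) := by
  apply hG.comp_continuous (continuous_id.max continuous_const)
  intro x
  exact lt_of_lt_of_le hc (le_max_right x c)

lemma uIcc_subset_Ioi {x y : ℝ} (hx : 0 < x) (hy : 0 < y) : uIcc x y ⊆ Ioi 0 := by
  intro t ht
  rcases mem_uIcc.mp ht with h | h <;> simp only [mem_Ioi] <;> linarith [h.1]

lemma intH (φ : ℝ) {x y : ℝ} (hx : 0 < x) (hy : 0 < y) :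
    IntervalIntegrable (H φ) MeasureTheory.volume x y :=
  ((H_continuousOn φ).mono (uIcc_subset_Ioi hx hy)).intervalIntegrable

lemma intK (φ : ℝ) {x y : ℝ} (hx : 0 < x) (hy : 0 < y) :
    IntervalIntegrable (K φ) MeasureTheory.volume x y :=
  ((K_continuousOn φ).mono (uIcc_subset_Ioi hx hy)).intervalIntegrable

end G8

open G8


/-- g(A₀) → ∞ as A₀ → ∞, and hence there is a unique A₀ ≥ A_f with g(A₀) = 0. -/
theorem g_tendsto_atTop_and_unique_root (a Af Bf : ℝ) (ha : 0 < a) (hAf : 0 < Af)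
    (hBf : 0 < Bf) (hratio : Af / Bf ≤ a ^ 2) :
    let φ : ℝ := Af * Bf + 1 / Af - 1 / Bf
    let f : ℝ → ℝ := fun w =>
      (φ * w - 1 + Real.sqrt ((φ * w - 1) ^ 2 + 4 * w ^ 3)) / (2 * w ^ 2)
    let g : ℝ → ℝ := fun A0 =>
      1 / Bf + (∫ w in Af..A0, f w / (1 + w * (f w) ^ 2))
        - (a / Real.sqrt (Af * Bf)) *
          Real.exp (-(1 / 2) * ∫ w in Af..A0, (1 / w - (f w) ^ 2 / (1 + w * (f w) ^ 2)))
    Tendsto g atTop atTop ∧ ∃! A0 : ℝ, Af ≤ A0 ∧ g A0 = 0 := by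
  intro φ f g
  have hf : f = F φ := rfl
  set C : ℝ := a / Real.sqrt (Af * Bf) with hC
  have hCpos : 0 < C := div_pos ha (Real.sqrt_pos.mpr (by positivity))
  have hg : ∀ A0, g A0 = 1 / Bf + (∫ w in Af..A0, H φ w)
      - C * Real.exp (-(1 / 2) * ∫ w in Af..A0, K φ w) := fun A0 => rfl
  -- the exponential factor is at most 1 for A0 ≥ Af
  have hI2nonneg : ∀ {A0 : ℝ}, Af ≤ A0 → 0 ≤ ∫ w in Af..A0, K φ w := by
    intro A0 hA0
    exact intervalIntegral.integral_nonneg hA0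
      (fun u hu => (K_pos φ (lt_of_lt_of_le hAf hu.1)).le)
  have hexp_le : ∀ {A0 : ℝ}, Af ≤ A0 →
      Real.exp (-(1 / 2) * ∫ w in Af..A0, K φ w) ≤ 1 := by
    intro A0 hA0
    rw [Real.exp_le_one_iff]
    nlinarith [hI2nonneg hA0]
  -- main lower bound
  set W : ℝ := max (2 + |φ|) Af with hW
  have hW0 : 0 < W := lt_of_lt_of_le hAf (le_max_right _ _)
  have hWAf : Af ≤ W := le_max_right _ _
  set c' : ℝ := 1 / ((3 + |φ|) * 3) with hc'
  have hc'pos : 0 < c' := by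
    have := abs_nonneg φ; rw [hc']; positivity
  have hlow : ∀ A0, W ≤ A0 →
      1 / Bf - C + c' * (Real.log A0 - Real.log W) ≤ g A0 := by
    intro A0 hA0
    have hA0pos : 0 < A0 := lt_of_lt_of_le hW0 hA0
    have hsplit : (∫ w in Af..W, H φ w) + (∫ w in W..A0, H φ w) = ∫ w in Af..A0, H φ w :=
      intervalIntegral.integral_add_adjacent_intervals (intH φ hAf hW0) (intH φ hW0 hA0pos)
    have h1 : 0 ≤ ∫ w in Af..W, H φ w :=
      intervalIntegral.integral_nonneg hWAf
        (fun u hu => H_nonneg φ (lt_of_lt_of_le hAf hu.1))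
    have h2 : c' * (Real.log A0 - Real.log W) ≤ ∫ w in W..A0, H φ w := by
      have hmono : (∫ w in W..A0, c' * w⁻¹) ≤ ∫ w in W..A0, H φ w := by
        apply intervalIntegral.integral_mono_on hA0
        · apply IntervalIntegrable.const_mul
          apply ContinuousOn.intervalIntegrable
          apply ContinuousOn.mono (by fun_prop (disch := intro x hx; exact ne_of_gt hx)) (uIcc_subset_Ioi hW0 hA0pos)
        · exact intH φ hW0 hA0pos
        · intro u hu
          have hu2 : 2 + |φ| ≤ u := le_trans (le_max_left _ _) hu.1
          have hu0 : 0 < u := lt_of_lt_of_le hW0 hu.1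
          have := H_ge φ hu2
          calc c' * u⁻¹ = 1 / ((3 + |φ|) * (3 * u)) := by
                rw [hc']; field_simp
            _ ≤ H φ u := this
      have hint : (∫ w in W..A0, c' * w⁻¹) = c' * (Real.log A0 - Real.log W) := by
        rw [intervalIntegral.integral_const_mul, integral_inv_of_pos hW0 hA0pos,
          Real.log_div (ne_of_gt hA0pos) (ne_of_gt hW0)]
      rw [← hint]; exact hmono
    have h3 := hexp_le (le_trans hWAf hA0)
    have h4 : C * Real.exp (-(1 / 2) * ∫ w in Af..A0, K φ w) ≤ C :=
      by nlinarith [h3, hCpos]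
    rw [hg A0]
    linarith [hsplit ▸ (by linarith [h1, h2] : c' * (Real.log A0 - Real.log W) ≤ (∫ w in Af..W, H φ w) + (∫ w in W..A0, H φ w))]
  -- Tendsto
  have htends : Tendsto g atTop atTop := by
    apply tendsto_atTop_mono' atTop (f₁ := fun A0 => 1 / Bf - C + c' * (Real.log A0 - Real.log W))
    · filter_upwards [eventually_ge_atTop W] with A0 hA0 using hlow A0 hA0
    · apply tendsto_atTop_add_const_left
      have h1 : Tendsto (fun x => c' * Real.log x) atTop atTop :=
        Real.tendsto_log_atTop.const_mul_atTop hc'pos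
      have h2 := tendsto_atTop_add_const_right atTop (-(c' * Real.log W)) h1
      exact h2.congr (fun x => by ring)
  refine ⟨htends, ?_⟩
  -- continuity of g on Ici Af
  have hcontg : ContinuousOn g (Ici Af) := by
    have hHc : Continuous (fun w => H φ (max w Af)) := clamp_continuous hAf (H_continuousOn φ)
    have hKc : Continuous (fun w => K φ (max w Af)) := clamp_continuous hAf (K_continuousOn φ)
    have hG : Continuous (fun A0 => 1 / Bf + (∫ w in Af..A0, H φ (max w Af))
        - C * Real.exp (-(1 / 2) * ∫ w in Af..A0, K φ (max w Af))) := by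
      apply Continuous.sub
      · exact continuous_const.add
          (intervalIntegral.continuous_primitive (fun x y => hHc.intervalIntegrable x y) Af)
      · exact continuous_const.mul ((Real.continuous_exp).comp
          (continuous_const.mul
            (intervalIntegral.continuous_primitive (fun x y => hKc.intervalIntegrable x y) Af)))
    apply hG.continuousOn.congr
    intro t ht
    have hAft : Af ≤ t := ht
    have e1 : (∫ w in Af..t, H φ w) = ∫ w in Af..t, H φ (max w Af) := by
      apply intervalIntegral.integral_congr
      intro u hu
      rw [uIcc_of_le hAft] at hu
      show H φ u = H φ (max u Af)
      rw [max_eq_left hu.1]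
    have e2 : (∫ w in Af..t, K φ w) = ∫ w in Af..t, K φ (max w Af) := by
      apply intervalIntegral.integral_congr
      intro u hu
      rw [uIcc_of_le hAft] at hu
      show K φ u = K φ (max u Af)
      rw [max_eq_left hu.1]
    rw [hg t, e1, e2]
  -- g Af ≤ 0
  have hgAf : g Af ≤ 0 := by
    rw [hg Af, intervalIntegral.integral_same, intervalIntegral.integral_same]
    simp only [mul_zero, Real.exp_zero, mul_one]
    have hsq : Real.sqrt (Af * Bf) ≤ a * Bf := by
      have h1 : Af * Bf ≤ (a * Bf) ^ 2 := by
        have := (div_le_iff₀ hBf).mp hratio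
        nlinarith [sq_nonneg Bf]
      calc Real.sqrt (Af * Bf) ≤ Real.sqrt ((a * Bf) ^ 2) := Real.sqrt_le_sqrt h1
        _ = a * Bf := Real.sqrt_sq (by positivity)
    have hsqpos : 0 < Real.sqrt (Af * Bf) := Real.sqrt_pos.mpr (by positivity)
    have : 1 / Bf ≤ C := by
      rw [hC]
      rw [div_le_div_iff₀ hBf hsqpos]
      calc 1 * Real.sqrt (Af * Bf) ≤ a * Bf := by linarith
        _ = a * Bf := rfl
    linarith
  -- strict monotonicity on Ici Af
  have hmono : StrictMonoOn g (Ici Af) := by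
    intro x hx y hy hxy
    have hx0 : 0 < x := lt_of_lt_of_le hAf hx
    have hy0 : 0 < y := lt_of_lt_of_le hAf hy
    have hsplitH : (∫ w in Af..x, H φ w) + (∫ w in x..y, H φ w) = ∫ w in Af..y, H φ w :=
      intervalIntegral.integral_add_adjacent_intervals (intH φ hAf hx0) (intH φ hx0 hy0)
    have hsplitK : (∫ w in Af..x, K φ w) + (∫ w in x..y, K φ w) = ∫ w in Af..y, K φ w :=
      intervalIntegral.integral_add_adjacent_intervals (intK φ hAf hx0) (intK φ hx0 hy0)
    have hHpos : 0 ≤ ∫ w in x..y, H φ w :=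
      intervalIntegral.integral_nonneg hxy.le
        (fun u hu => H_nonneg φ (lt_of_lt_of_le hx0 hu.1))
    have hKpos : 0 < ∫ w in x..y, K φ w := by
      apply intervalIntegral.intervalIntegral_pos_of_pos_on (intK φ hx0 hy0)
      · exact fun u hu => K_pos φ (lt_trans hx0 hu.1)
      · exact hxy
    have hexp : Real.exp (-(1 / 2) * ∫ w in Af..y, K φ w)
        < Real.exp (-(1 / 2) * ∫ w in Af..x, K φ w) := by
      apply Real.exp_lt_exp.mpr
      nlinarith [hKpos, hsplitK]
    rw [hg x, hg y]
    nlinarith [hexp, hCpos, hHpos, hsplitH]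
  -- existence via IVT
  obtain ⟨b, hb1, hb2⟩ : ∃ b, 0 ≤ g b ∧ Af ≤ b :=
    ((htends.eventually_ge_atTop 0).and (eventually_ge_atTop Af)).exists
  have hIcc : ContinuousOn g (Icc Af b) := hcontg.mono (Icc_subset_Ici_self)
  have h0mem : (0:ℝ) ∈ Icc (g Af) (g b) := ⟨hgAf, hb1⟩
  obtain ⟨A0, hA0mem, hA0⟩ := intermediate_value_Icc hb2 hIcc h0mem
  refine ⟨A0, ⟨hA0mem.1, hA0⟩, ?_⟩
  intro y hy
  exact hmono.injOn hy.1 (mem_Ici.mpr hA0mem.1) (by rw [hy.2, hA0])
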